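/- Let M be a finitely generated commutative binoid and K an integral domain. Then the map from the sigma type Σ_{r ∈ Adm(M)} MonoidWithZeroHom (M(r)) K to MonoidWithZeroHom M K, sending a pair (r, φ) to the composition of φ with the canonical quotient map M → M(r), is a bijection. Moreover, for every r ∈ Adm(M) the only idempotent elements of M(r) are 0 and 1. -/

import Mathlib

/-- The quotient of a commutative binoid by a congruence is again a binoid,
with zero the class of `0`. -/
instance conQuotCMWZ {M : Type*} [CommMonoidWithZero M] (c : Con M) :
    CommMonoidWithZero c.Quotient where
  __ := (inferInstance : CommMonoid c.Quotient)
  zero := c.mk' 0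
  zero_mul a := Con.induction_on a fun x => by
    show c.mk' 0 * c.mk' x = c.mk' 0
    rw [← map_mul, zero_mul]
  mul_zero a := Con.induction_on a fun x => by
    show c.mk' x * c.mk' 0 = c.mk' 0
    rw [← map_mul, mul_zero]
/-- `r` is a prime ideal of the binoid `Idem(M)` of idempotents of `M`:
`r` consists of idempotents, contains `0`, does not contain `1`, is an ideal of
`Idem(M)`, and is prime. `Adm(M)` is the collection of all such `r`. -/
def IsAdm {M : Type*} [CommMonoidWithZero M] (r : Set M) : Prop :=
  (∀ e ∈ r, e * e = e) ∧ (0 : M) ∈ r ∧ (1 : M) ∉ r ∧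
    (∀ e ∈ r, ∀ f : M, f * f = f → e * f ∈ r) ∧
    (∀ e f : M, e * e = e → f * f = f → e * f ∈ r → e ∈ r ∨ f ∈ r)

/-- The smallest monoid congruence identifying every `e ∈ r` with `0` and every
idempotent `e ∉ r` with `1`; its quotient is `M(r)`. -/
def admCon {M : Type*} [CommMonoidWithZero M] (r : Set M) : Con M :=
  conGen fun x y => (x ∈ r ∧ y = 0) ∨ (x * x = x ∧ x ∉ r ∧ y = 1)

/-- The quotient binoid `M(r)`. -/
abbrev admQuot {M : Type*} [CommMonoidWithZero M] (r : Set M) := (admCon r).Quotient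

/-- The canonical quotient map `M → M(r)` as a binoid homomorphism. -/
def admHom {M : Type*} [CommMonoidWithZero M] (r : Set M) :
    MonoidWithZeroHom M (admQuot r) :=
  { (admCon r).mk' with map_zero' := rfl }

section Aux
variable {M : Type*} [CommMonoidWithZero M] {r : Set M}

/-- Idempotents not in `r`. -/
def admF (r : Set M) : Set M := {e | e * e = e ∧ e ∉ r}

/-- Elements killed by the congruence. -/
def admZ (r : Set M) : Set M := {a | ∃ e ∈ admF r, ∃ f ∈ r, a * e * f = a * e}

lemma admF_one (hr : IsAdm r) : (1 : M) ∈ admF r := ⟨one_mul 1, hr.2.2.1⟩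

lemma admF_mul (hr : IsAdm r) {e f : M} (he : e ∈ admF r) (hf : f ∈ admF r) :
    e * f ∈ admF r := by
  refine ⟨by rw [mul_mul_mul_comm, he.1, hf.1], fun hmem => ?_⟩
  rcases hr.2.2.2.2 e f he.1 hf.1 hmem with h | h
  exacts [he.2 h, hf.2 h]

lemma admZ_mul {a : M} (ha : a ∈ admZ r) (m : M) : a * m ∈ admZ r := by
  obtain ⟨e, he, f, hf, hef⟩ := ha
  refine ⟨e, he, f, hf, ?_⟩
  calc a * m * e * f = a * e * f * m := by simp only [mul_comm, mul_left_comm, mul_assoc]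
    _ = a * e * m := by rw [hef]
    _ = a * m * e := by simp only [mul_comm, mul_left_comm, mul_assoc]

lemma admZ_mul_left {a : M} (ha : a ∈ admZ r) (m : M) : m * a ∈ admZ r := by
  rw [mul_comm]; exact admZ_mul ha m

lemma admZ_of_eq (hr : IsAdm r) {a b e f : M} (he : e ∈ admF r) (hf : f ∈ admF r)
    (hb : b ∈ admZ r) (hab : a * e = b * f) : a ∈ admZ r := by
  obtain ⟨e', he', f', hf', h'⟩ := hb
  refine ⟨e * e', admF_mul hr he he', f', hf', ?_⟩
  calc a * (e * e') * f' = b * f * e' * f' := by rw [← mul_assoc, hab]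
    _ = b * e' * f' * f := by simp only [mul_comm, mul_left_comm, mul_assoc]
    _ = b * e' * f := by rw [h']
    _ = b * f * e' := by simp only [mul_comm, mul_left_comm, mul_assoc]
    _ = a * e * e' := by rw [hab]
    _ = a * (e * e') := by rw [mul_assoc]

/-- The explicit congruence describing `admCon r`. -/
def admConC (hr : IsAdm r) : Con M where
  r := fun a b => (a ∈ admZ r ∧ b ∈ admZ r) ∨ ∃ e ∈ admF r, ∃ f ∈ admF r, a * e = b * f
  iseqv := {
    refl := fun a => Or.inr ⟨1, admF_one hr, 1, admF_one hr, rfl⟩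
    symm := by
      rintro a b (⟨h1, h2⟩ | ⟨e, he, f, hf, h⟩)
      exacts [Or.inl ⟨h2, h1⟩, Or.inr ⟨f, hf, e, he, h.symm⟩]
    trans := by
      rintro a b c (⟨ha, hb⟩ | ⟨e, he, f, hf, h⟩) (⟨hb', hc⟩ | ⟨e', he', f', hf', h'⟩)
      · exact Or.inl ⟨ha, hc⟩
      · exact Or.inl ⟨ha, admZ_of_eq hr hf' he' hb h'.symm⟩
      · exact Or.inl ⟨admZ_of_eq hr he hf hb' h, hc⟩
      · refine Or.inr ⟨e * e', admF_mul hr he he', f' * f, admF_mul hr hf' hf, ?_⟩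
        calc a * (e * e') = a * e * e' := by rw [mul_assoc]
          _ = b * f * e' := by rw [h]
          _ = b * e' * f := by simp only [mul_comm, mul_left_comm, mul_assoc]
          _ = c * f' * f := by rw [h']
          _ = c * (f' * f) := by rw [mul_assoc] }
  mul' := by
    rintro a b x y (⟨ha, hb⟩ | ⟨e, he, f, hf, h⟩) h2
    · refine Or.inl ⟨admZ_mul ha x, ?_⟩
      rcases h2 with ⟨hx, hy⟩ | _
      · exact admZ_mul_left hy b
      · exact admZ_mul hb y
    · rcases h2 with ⟨hx, hy⟩ | ⟨e', he', f', hf', h'⟩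
      · exact Or.inl ⟨admZ_mul_left hx a, admZ_mul_left hy b⟩
      · refine Or.inr ⟨e * e', admF_mul hr he he', f * f', admF_mul hr hf hf', ?_⟩
        calc a * x * (e * e') = (a * e) * (x * e') := by
              simp only [mul_comm, mul_left_comm, mul_assoc]
          _ = (b * f) * (y * f') := by rw [h, h']
          _ = b * y * (f * f') := by simp only [mul_comm, mul_left_comm, mul_assoc]

lemma admCon_le (hr : IsAdm r) : admCon r ≤ admConC hr := by
  apply Con.conGen_le.2
  rintro x y (⟨hx, rfl⟩ | ⟨hxx, hx, rfl⟩)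
  · exact Or.inl ⟨⟨1, admF_one hr, x, hx, by rw [mul_one, hr.1 x hx]⟩,
      ⟨1, admF_one hr, 0, hr.2.1, by simp⟩⟩
  · exact Or.inr ⟨x, ⟨hxx, hx⟩, x, ⟨hxx, hx⟩, by rw [hxx, one_mul]⟩

lemma admHom_eq_zero {e : M} (he : e ∈ r) : admHom r e = 0 := by
  show (e : admQuot r) = ((0 : M) : admQuot r)
  exact ((admCon r).eq).mpr (ConGen.Rel.of _ _ (Or.inl ⟨he, rfl⟩))

lemma admHom_eq_one {e : M} (hee : e * e = e) (he : e ∉ r) : admHom r e = 1 := by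
  show (e : admQuot r) = ((1 : M) : admQuot r)
  exact ((admCon r).eq).mpr (ConGen.Rel.of _ _ (Or.inr ⟨hee, he, rfl⟩))

lemma admHom_eq_zero_of_Z {a : M} (ha : a ∈ admZ r) : admHom r a = 0 := by
  obtain ⟨e, he, f, hf, hef⟩ := ha
  have h1 : admHom r e = 1 := admHom_eq_one he.1 he.2
  have h0 : admHom r f = 0 := admHom_eq_zero hf
  calc admHom r a = admHom r a * admHom r e := by rw [h1, mul_one]
    _ = admHom r (a * e) := by rw [map_mul]
    _ = admHom r (a * e * f) := by rw [hef]
    _ = admHom r (a * e) * admHom r f := by rw [map_mul]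
    _ = 0 := by rw [h0, mul_zero]

end Aux

/-- Let `M` be a finitely generated commutative binoid and `K` an integral
domain. The map `Σ_{r ∈ Adm(M)} MonoidWithZeroHom (M(r)) K → MonoidWithZeroHom M K`, sending
`(r, φ)` to the composite of `φ` with the canonical quotient map `M → M(r)`, is a bijection.
Moreover, for every `r ∈ Adm(M)` the only idempotents of `M(r)` are `0` and `1`. -/
theorem kspec_adm_decomposition {M K : Type*} [CommMonoidWithZero M] [CommRing K] [IsDomain K]
    (hfg : ∃ S : Finset M, Submonoid.closure (S : Set M) = ⊤) :
    Function.Bijective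
      (fun p : Σ r : {r : Set M // IsAdm r}, MonoidWithZeroHom (admQuot r.val) K =>
        p.2.comp (admHom p.1.val)) ∧
    ∀ r : Set M, IsAdm r → ∀ z : admQuot r, z * z = z → z = 0 ∨ z = 1 := by
  constructor
  · constructor
    · -- injectivity
      rintro ⟨⟨r₁, h₁⟩, ψ₁⟩ ⟨⟨r₂, h₂⟩, ψ₂⟩ h
      have hcong : ∀ x : M, ψ₁ (admHom r₁ x) = ψ₂ (admHom r₂ x) := fun x =>
        DFunLike.congr_fun h x
      have hr : r₁ = r₂ := by
        ext e
        constructor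
        · intro he
          by_contra he2
          have h1 : ψ₁ (admHom r₁ e) = 0 := by rw [admHom_eq_zero he, map_zero]
          have h2 : ψ₂ (admHom r₂ e) = 1 := by
            rw [admHom_eq_one (h₁.1 e he) he2, map_one]
          rw [hcong e, h2] at h1
          exact one_ne_zero h1
        · intro he
          by_contra he2
          have h1 : ψ₂ (admHom r₂ e) = 0 := by rw [admHom_eq_zero he, map_zero]
          have h2 : ψ₁ (admHom r₁ e) = 1 := by
            rw [admHom_eq_one (h₂.1 e he) he2, map_one]
          rw [← hcong e, h2] at h1
          exact one_ne_zero h1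
      subst hr
      have hψ : ψ₁ = ψ₂ := by
        ext z
        obtain ⟨x, rfl⟩ := Con.mk'_surjective z
        exact hcong x
      rw [hψ]
    · -- surjectivity
      intro φ
      have hAdm : IsAdm {e : M | e * e = e ∧ φ e = 0} := by
        refine ⟨fun e he => he.1, ⟨by rw [mul_zero], map_zero φ⟩,
          fun h => (one_ne_zero : (1:K) ≠ 0) <| (by rw [← map_one φ]; exact h.2), ?_, ?_⟩
        · intro e he f hf
          exact ⟨by rw [mul_mul_mul_comm, he.1, hf], by rw [map_mul, he.2, zero_mul]⟩
        · intro e f he hf hef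
          have : φ e * φ f = 0 := by rw [← map_mul]; exact hef.2
          rcases mul_eq_zero.mp this with h | h
          · exact Or.inl ⟨he, h⟩
          · exact Or.inr ⟨hf, h⟩
      set rφ : Set M := {e : M | e * e = e ∧ φ e = 0}
      have hker : admCon rφ ≤ Con.ker φ.toMonoidHom := by
        apply Con.conGen_le.2
        rintro x y (⟨hx, rfl⟩ | ⟨hxx, hx, rfl⟩)
        · show φ x = φ 0
          rw [map_zero]; exact hx.2
        · show φ x = φ 1
          rw [map_one]
          have hid : φ x * φ x = φ x := by rw [← map_mul, hxx]
          have : φ x * (φ x - 1) = 0 := by rw [mul_sub, mul_one, hid, sub_self]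
          rcases mul_eq_zero.mp this with h | h
          · exact absurd ⟨hxx, h⟩ hx
          · exact sub_eq_zero.mp h
      set ψ : admQuot rφ →* K := (admCon rφ).lift φ.toMonoidHom hker with hψdef
      have hψ0 : ψ (0 : admQuot rφ) = 0 := by
        show ψ (((0 : M) : admQuot rφ)) = 0
        rw [Con.lift_coe]
        exact map_zero φ
      refine ⟨⟨⟨rφ, hAdm⟩, ({ toFun := ψ, map_zero' := hψ0, map_one' := map_one ψ, map_mul' := fun a b => map_mul ψ a b } : MonoidWithZeroHom (admQuot rφ) K)⟩, ?_⟩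
      ext x
      show ψ ((x : M) : admQuot rφ) = φ x
      rw [Con.lift_coe]
      rfl
  · -- idempotents of the quotient
    intro r hr z hz
    obtain ⟨x, rfl⟩ := Con.mk'_surjective z
    have hx2 : admHom r (x * x) = admHom r x := by rw [map_mul]; exact hz
    have hrel : admConC hr (x * x) x := admCon_le hr (((admCon r).eq).mp hx2)
    rcases hrel with ⟨hZ, hZ'⟩ | ⟨e, he, f, hf, h⟩
    · left
      exact admHom_eq_zero_of_Z hZ'
    · set u := x * e with hu
      have hu2 : u * u = u * f := by
        calc u * u = x * x * e * e := by rw [hu]; simp only [mul_comm, mul_left_comm, mul_assoc]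
          _ = x * f * e := by rw [h]
          _ = u * f := by rw [hu]; simp only [mul_comm, mul_left_comm, mul_assoc]
      have h3 : u * u * u = u * u := by
        calc u * u * u = u * f * u := by rw [hu2]
          _ = u * u * f := by simp only [mul_comm, mul_left_comm, mul_assoc]
          _ = u * f * f := by rw [hu2]
          _ = u * (f * f) := by rw [mul_assoc]
          _ = u * f := by rw [hf.1]
          _ = u * u := hu2.symm
      have h4 : (u * u) * (u * u) = u * u := by rw [← mul_assoc, h3, h3]
      have hπu : admHom r u = (admHom r x) := by
        rw [hu, map_mul, admHom_eq_one he.1 he.2, mul_one]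
      have hπe0 : admHom r (u * u) = admHom r x := by
        rw [map_mul, hπu]; exact hz
      by_cases hmem : u * u ∈ r
      · left
        show admHom r x = 0
        rw [← hπe0]; exact admHom_eq_zero hmem
      · right
        show admHom r x = 1
        rw [← hπe0]; exact admHom_eq_one h4 hmem
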